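/- arXiv:quant-ph/0410061 — 2 statements merged into one kernel-verified Lean document; each statement's English description precedes it below -/
import Mathlib

section
/- Let ℏ > 0 and let ψ be a Schwartz function on ℝ with ‖ψ‖_{L²(ℝ)} = 1. Let Q be multiplication by x (Qψ(x) = x ψ(x)) and P = (ℏ/i) d/dx. Set q = ⟨Qψ, ψ⟩ and p = ⟨Pψ, ψ⟩ (both real). Then the variances Δq = ‖(Q − q)ψ‖_{L²} and Δp = ‖(P − p)ψ‖_{L²} satisfy Δq · Δp ≥ ℏ/2. -/
open MeasureTheory Complex Topology Filter ComplexConjugate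
open scoped ENNReal

noncomputable section

/-- The position operator `Q` applied to `ψ`: multiplication by `x`. -/
def posOp (ψ : SchwartzMap ℝ ℂ) : ℝ → ℂ := fun x => (x : ℂ) * ψ x

/-- The momentum operator `P = (ℏ/i) d/dx` applied to `ψ`. -/
def momOp (ℏ : ℝ) (ψ : SchwartzMap ℝ ℂ) : ℝ → ℂ :=
  fun x => (ℏ : ℂ) / Complex.I * deriv (fun y : ℝ => ψ y) x

/-- The `L²(ℝ)` inner product `⟨f, g⟩ = ∫ f(x) conj (g x) dx`. -/
def l2Inner (f g : ℝ → ℂ) : ℂ := ∫ x : ℝ, f x * star (g x)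

/-- The `L²(ℝ)` norm. -/
def l2Norm (f : ℝ → ℂ) : ℝ := Real.sqrt (∫ x : ℝ, ‖f x‖ ^ 2)

def mulX (ψ : SchwartzMap ℝ ℂ) : SchwartzMap ℝ ℂ :=
  SchwartzMap.bilinLeftCLM (ContinuousLinearMap.mul ℝ ℂ) Complex.ofRealCLM.hasTemperateGrowth ψ

lemma mulX_apply (ψ : SchwartzMap ℝ ℂ) (x : ℝ) : mulX ψ x = ψ x * x := rfl

lemma schwartz_bdd (f : SchwartzMap ℝ ℂ) : ∃ C, ∀ x, ‖f x‖ ≤ C :=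
  ⟨_, fun x => f.toBoundedContinuousFunction.norm_coe_le_norm x⟩

lemma star_schwartz_integrable (g : SchwartzMap ℝ ℂ) :
    Integrable (fun x => star (g x)) volume :=
  g.integrable.norm.mono' ((continuous_star.comp g.continuous).aestronglyMeasurable)
    (ae_of_all _ fun x => by simp)

lemma mul_star_integrable (f g : SchwartzMap ℝ ℂ) :
    Integrable (fun x => f x * star (g x)) volume :=
  (star_schwartz_integrable g).bdd_mul f.continuous.aestronglyMeasurable
    (ae_of_all _ (schwartz_bdd f).choose_spec)

lemma schwartz_memL2 (f : SchwartzMap ℝ ℂ) : MemLp (fun x => f x) 2 (volume : Measure ℝ) := by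
  rw [memLp_two_iff_integrable_sq_norm f.continuous.aestronglyMeasurable]
  have h : Integrable (fun x => ‖f x‖ * ‖f x‖) volume :=
    f.integrable.norm.bdd_mul f.continuous.norm.aestronglyMeasurable
      (c := (schwartz_bdd f).choose) (ae_of_all _ (fun x => by simpa using (schwartz_bdd f).choose_spec x))
  simpa [sq] using h

lemma l2Inner_le_l2Norm {f g : ℝ → ℂ} (hf : MemLp f 2 (volume : Measure ℝ))
    (hg : MemLp g 2 (volume : Measure ℝ)) : ‖l2Inner f g‖ ≤ l2Norm f * l2Norm g := by
  have hnorm : ∀ (h : ℝ → ℂ) (hh : MemLp h 2 (volume : Measure ℝ)),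
      ‖hh.toLp h‖ = l2Norm h := by
    intro h hh
    rw [Lp.norm_toLp, hh.eLpNorm_eq_integral_rpow_norm two_ne_zero ENNReal.ofNat_ne_top,
      ENNReal.toReal_ofReal (by positivity)]
    have h2 : (2 : ℝ≥0∞).toReal = (2 : ℝ) := by simp
    rw [l2Norm, Real.sqrt_eq_rpow]
    rw [h2]
    norm_num
  have key : (inner ℂ (hg.toLp g) (hf.toLp f) : ℂ) = l2Inner f g := by
    rw [L2.inner_def]
    unfold l2Inner
    apply integral_congr_ae
    filter_upwards [hf.coeFn_toLp, hg.coeFn_toLp] with x hfx hgx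
    rw [hfx, hgx, RCLike.inner_apply]
    simp [mul_comm, Complex.star_def]
  rw [← key]
  calc ‖(inner ℂ (hg.toLp g) (hf.toLp f) : ℂ)‖ ≤ ‖hg.toLp g‖ * ‖hf.toLp f‖ :=
        norm_inner_le_norm _ _
    _ = l2Norm f * l2Norm g := by rw [hnorm f hf, hnorm g hg, mul_comm]

lemma integral_deriv_eq_zero' {f f' : ℝ → ℂ} (hd : ∀ x, HasDerivAt f (f' x) x)
    (hi : Integrable f' volume) (h0 : Tendsto f (cocompact ℝ) (𝓝 0)) :
    ∫ x : ℝ, f' x = 0 := by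
  have hco : cocompact ℝ = atBot ⊔ atTop := cocompact_eq_atBot_atTop
  have htop : Tendsto f atTop (𝓝 0) := h0.mono_left (by rw [hco]; exact le_sup_right)
  have hbot : Tendsto f atBot (𝓝 0) := h0.mono_left (by rw [hco]; exact le_sup_left)
  have h1 : ∫ x in Set.Ioi (0:ℝ), f' x = 0 - f 0 :=
    integral_Ioi_of_hasDerivAt_of_tendsto' (fun x _ => hd x) hi.integrableOn htop
  have h2 : ∫ x in Set.Iic (0:ℝ), f' x = f 0 - 0 :=
    integral_Iic_of_hasDerivAt_of_tendsto' (fun x _ => hd x) hi.integrableOn hbot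
  rw [← intervalIntegral.integral_Iic_add_Ioi (b := (0:ℝ)) hi.integrableOn hi.integrableOn,
    h1, h2]
  ring

/-- Product of two Schwartz functions (one conjugated) tends to zero at infinity. -/
lemma mul_star_zero_at_infty (f g : SchwartzMap ℝ ℂ) :
    Tendsto (fun x => f x * star (g x)) (cocompact ℝ) (𝓝 0) := by
  have h2 : Tendsto (fun x => ‖f x‖ * ‖g x‖) (cocompact ℝ) (𝓝 (‖(0:ℂ)‖ * ‖(0:ℂ)‖)) :=
    ((zero_at_infty f).norm.mul (zero_at_infty g).norm)
  refine squeeze_zero_norm (fun x => ?_) (by simpa using h2)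
  simp [norm_mul]

/-- **Heisenberg uncertainty principle.**  If `ψ` is a normalized Schwartz state, the
variances of position and momentum satisfy `Δq · Δp ≥ ℏ/2`. -/
theorem heisenberg_uncertainty (ℏ : ℝ) (hℏ : 0 < ℏ) (ψ : SchwartzMap ℝ ℂ)
    (hψ : l2Norm (fun x => ψ x) = 1) :
    l2Norm (fun x => posOp ψ x - l2Inner (posOp ψ) (fun y => ψ y) * ψ x) *
      l2Norm (fun x => momOp ℏ ψ x - l2Inner (momOp ℏ ψ) (fun y => ψ y) * ψ x) ≥ ℏ / 2 := by
  -- derivative of ψ as a Schwartz function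
  set ψ' : SchwartzMap ℝ ℂ := SchwartzMap.derivCLM ℝ ℂ ψ with hψ'def
  have hd : ∀ x, HasDerivAt (fun y : ℝ => ψ y) (ψ' x) x := fun x =>
    (ψ.differentiableAt).hasDerivAt
  have hderiv_eq : ∀ x, deriv (fun y : ℝ => ψ y) x = ψ' x := fun x => rfl
  set q : ℂ := l2Inner (posOp ψ) (fun y => ψ y) with hqdef
  set p : ℂ := l2Inner (momOp ℏ ψ) (fun y => ψ y) with hpdef
  set c : ℂ := (ℏ : ℂ) / Complex.I with hcdef
  set A : SchwartzMap ℝ ℂ := mulX ψ - q • ψ with hAdef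
  set B : SchwartzMap ℝ ℂ := c • ψ' - p • ψ with hBdef
  set C : SchwartzMap ℝ ℂ := ψ + (mulX ψ' - q • ψ') with hCdef
  have hAx : ∀ x, A x = ψ x * x - q * ψ x := fun x => rfl
  have hBx : ∀ x, B x = c * ψ' x - p * ψ x := fun x => rfl
  have hCx : ∀ x, C x = ψ x + (ψ' x * x - q * ψ' x) := fun x => rfl
  -- normalization
  have hΨ1 : ∫ x : ℝ, ψ x * star (ψ x) = (1 : ℂ) := by
    have h0 : ∀ x : ℝ, ψ x * star (ψ x) = ((‖ψ x‖ ^ 2 : ℝ) : ℂ) := fun x => by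
      rw [Complex.star_def, Complex.mul_conj, Complex.normSq_eq_norm_sq]
    have hs : ∫ x : ℝ, ‖ψ x‖ ^ 2 = 1 := by
      have := hψ
      rw [l2Norm, Real.sqrt_eq_one] at this
      exact this
    calc ∫ x : ℝ, ψ x * star (ψ x) = ∫ x : ℝ, ((‖ψ x‖ ^ 2 : ℝ) : ℂ) := by simp_rw [h0]
      _ = ((∫ x : ℝ, ‖ψ x‖ ^ 2 : ℝ) : ℂ) := integral_ofReal
      _ = 1 := by rw [hs]; norm_num
  -- realness of q
  have hq : conj q = q := by
    rw [hqdef]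
    unfold l2Inner posOp
    rw [← integral_conj]
    apply integral_congr_ae
    refine ae_of_all _ fun x => ?_
    simp only [Complex.star_def, map_mul, Complex.conj_conj, Complex.conj_ofReal]
    ring
  -- conj c = -c
  have hc : conj c = -c := by
    rw [hcdef, map_div₀]
    simp only [Complex.conj_ofReal, Complex.conj_I, div_neg, Complex.div_I]
  -- integration by parts, basic version
  have hIBP0 : ∫ x : ℝ, (ψ' x * star (ψ x) + ψ x * star (ψ' x)) = 0 := by
    refine integral_deriv_eq_zero' (f := fun x => ψ x * star (ψ x))
      (fun x => (hd x).mul ((hd x).star))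
      ((mul_star_integrable ψ' ψ).add (mul_star_integrable ψ ψ'))
      (mul_star_zero_at_infty ψ ψ)
  -- realness of p
  have hp : conj p = p := by
    have h1 : p = c * ∫ x : ℝ, ψ' x * star (ψ x) := by
      rw [hpdef]
      unfold l2Inner momOp
      simp_rw [hderiv_eq]
      rw [← integral_const_mul]
      apply integral_congr_ae
      refine ae_of_all _ fun x => ?_
      ring
    have h4 : (∫ x : ℝ, ψ x * star (ψ' x)) = -∫ x : ℝ, ψ' x * star (ψ x) := by
      have h3 := hIBP0
      rw [integral_add (mul_star_integrable ψ' ψ) (mul_star_integrable ψ ψ')] at h3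
      linear_combination h3
    have h2 : conj p = -c * ∫ x : ℝ, ψ x * star (ψ' x) := by
      rw [h1, map_mul, hc, ← integral_conj]
      congr 1
      apply integral_congr_ae
      refine ae_of_all _ fun x => ?_
      simp only [Complex.star_def, map_mul, Complex.conj_conj]
      ring
    rw [h2, h4, h1]
    ring
  -- the main integration by parts
  have hu : ∀ x, HasDerivAt (fun y : ℝ => A y * star (ψ y))
      (C x * star (ψ x) + A x * star (ψ' x)) x := by
    intro x
    have hofReal : HasDerivAt (fun y : ℝ => (y : ℂ)) 1 x := by
      simpa using (hasDerivAt_id x).ofReal_comp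
    have h1 : HasDerivAt (fun y : ℝ => ψ y * (y : ℂ)) (ψ' x * x + ψ x * 1) x :=
      (hd x).mul hofReal
    have h2 : HasDerivAt (fun y : ℝ => q * ψ y) (q * ψ' x) x := (hd x).const_mul q
    have hA' : HasDerivAt (fun y : ℝ => A y) (C x) x := by
      have h3 := h1.sub h2
      have : C x = (ψ' x * x + ψ x * 1) - q * ψ' x := by rw [hCx]; ring
      rw [this]
      exact h3
    exact hA'.mul ((hd x).star)
  have huint : Integrable (fun x : ℝ => C x * star (ψ x) + A x * star (ψ' x)) volume :=
    (mul_star_integrable C ψ).add (mul_star_integrable A ψ')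
  have hIBP1 : ∫ x : ℝ, (C x * star (ψ x) + A x * star (ψ' x)) = 0 :=
    integral_deriv_eq_zero' hu huint (mul_star_zero_at_infty A ψ)
  -- the inner product z
  set z : ℂ := ∫ x : ℝ, A x * star (B x) with hzdef
  have hpoint : ∀ x : ℝ, A x * star (B x) - conj (A x * star (B x)) =
      c * (ψ x * star (ψ x)) - c * (C x * star (ψ x) + A x * star (ψ' x)) := by
    intro x
    have e0 : conj (A x * star (B x)) = conj (A x) * B x := by
      simp only [Complex.star_def, map_mul, Complex.conj_conj]
    have e1 : conj (B x) = -c * conj (ψ' x) - p * conj (ψ x) := by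
      rw [hBx]
      simp only [map_sub, map_mul, hc, hp]
    have e2 : conj (A x) = conj (ψ x) * x - q * conj (ψ x) := by
      rw [hAx]
      simp only [map_sub, map_mul, hq, Complex.conj_ofReal]
    rw [e0]
    simp only [Complex.star_def]
    rw [e1, e2, hAx, hBx, hCx]
    ring
  have hz1 : z - conj z = c := by
    have hconjz : conj z = ∫ x : ℝ, conj (A x * star (B x)) := integral_conj.symm
    have hint1 : Integrable (fun x : ℝ => A x * star (B x)) volume := mul_star_integrable A B
    have hint2 : Integrable (fun x : ℝ => conj (A x * star (B x))) volume := by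
      refine (mul_star_integrable B A).congr (ae_of_all _ fun x => ?_)
      simp only [Complex.star_def, map_mul, Complex.conj_conj]
      ring
    rw [hzdef, hconjz, ← integral_sub hint1 hint2]
    have hint3 : Integrable (fun x : ℝ => c * (ψ x * star (ψ x))) volume :=
      (mul_star_integrable ψ ψ).const_mul c
    have hint4 : Integrable (fun x : ℝ => c * (C x * star (ψ x) + A x * star (ψ' x))) volume :=
      huint.const_mul c
    calc ∫ x : ℝ, (A x * star (B x) - conj (A x * star (B x)))
        = ∫ x : ℝ, (c * (ψ x * star (ψ x)) - c * (C x * star (ψ x) + A x * star (ψ' x))) :=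
          integral_congr_ae (ae_of_all _ hpoint)
      _ = (∫ x : ℝ, c * (ψ x * star (ψ x))) -
            ∫ x : ℝ, c * (C x * star (ψ x) + A x * star (ψ' x)) := integral_sub hint3 hint4
      _ = c * (∫ x : ℝ, ψ x * star (ψ x)) -
            c * ∫ x : ℝ, (C x * star (ψ x) + A x * star (ψ' x)) := by
          rw [integral_const_mul, integral_const_mul]
      _ = c := by rw [hΨ1, hIBP1]; ring
  have him : z.im = -ℏ / 2 := by
    rw [Complex.sub_conj] at hz1
    have h := congrArg Complex.im hz1
    have hL : (((2 * z.im : ℝ) : ℂ) * Complex.I).im = 2 * z.im := by simp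
    have hR : c.im = -ℏ := by
      rw [hcdef, Complex.div_I]
      simp
    rw [hL, hR] at h
    linarith
  have habs : ℏ / 2 ≤ ‖z‖ := by
    have h1 := Complex.abs_im_le_norm z
    rw [him] at h1
    have h2 : |(-ℏ / 2)| = ℏ / 2 := by
      rw [abs_of_nonpos (by linarith)]
      ring
    linarith [h2 ▸ h1]
  -- rewrite the goal
  have hAfun : (fun x => posOp ψ x - q * ψ x) = fun x => A x := by
    funext x
    rw [hAx]
    unfold posOp
    ring
  have hBfun : (fun x => momOp ℏ ψ x - p * ψ x) = fun x => B x := by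
    funext x
    rw [hBx]
    unfold momOp
    rw [hderiv_eq]
  rw [hAfun, hBfun]
  have hcs : ‖l2Inner (fun x => A x) (fun x => B x)‖ ≤
      l2Norm (fun x => A x) * l2Norm (fun x => B x) :=
    l2Inner_le_l2Norm (schwartz_memL2 A) (schwartz_memL2 B)
  have : l2Inner (fun x => A x) (fun x => B x) = z := rfl
  rw [this] at hcs
  exact le_trans habs hcs
end
end

section
/- Let f : ℝ → ℂ be bounded and uniformly continuous and let A ∈ ℂ. Then the following are equivalent: (1) lim_{t→∞} f(t) exists and equals A; (2) for every φ ∈ L¹(ℝ), lim_{t→∞} (φ * f)(t) exists and equals A ∫_ℝ φ(r) dr, where (φ * f)(t) = ∫_ℝ φ(t−r) f(r) dr. -/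
open MeasureTheory Complex Topology Filter

/-- **Abelian/Tauberian equivalence for convolutions**: a bounded uniformly continuous
function `f` converges to `A` at `+∞` iff for every `φ ∈ L¹` the convolution `φ * f`
converges to `A ∫ φ` at `+∞`. -/
theorem tendsto_iff_convolution_tendsto (f : ℝ → ℂ) (M : ℝ) (hbd : ∀ t, ‖f t‖ ≤ M)
    (huc : UniformContinuous f) (A : ℂ) :
    Tendsto f atTop (𝓝 A) ↔
      ∀ φ : ℝ → ℂ, Integrable φ (volume : Measure ℝ) →
        Tendsto (fun t : ℝ => ∫ r : ℝ, φ (t - r) * f r) atTop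
          (𝓝 (A * ∫ r : ℝ, φ r)) := by
  have hf : Continuous f := huc.continuous
  have hM : 0 ≤ M := le_trans (norm_nonneg _) (hbd 0)
  constructor
  · intro hA φ hφ
    have hcv : ∀ t : ℝ, (∫ r : ℝ, φ (t - r) * f r) = ∫ s : ℝ, φ s * f (t - s) := by
      intro t
      rw [← MeasureTheory.integral_sub_left_eq_self (fun s => φ s * f (t - s)) volume t]
      simp [sub_sub_cancel]
    have key : Tendsto (fun t : ℝ => ∫ s : ℝ, φ s * f (t - s)) atTop
        (𝓝 (∫ s : ℝ, φ s * A)) := by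
      apply tendsto_integral_filter_of_dominated_convergence (fun s => ‖φ s‖ * M)
      · filter_upwards with t
        exact hφ.aestronglyMeasurable.mul
          ((hf.comp (continuous_const.sub continuous_id)).aestronglyMeasurable)
      · filter_upwards with t
        filter_upwards with s
        rw [norm_mul]
        exact mul_le_mul_of_nonneg_left (hbd _) (norm_nonneg _)
      · exact hφ.norm.mul_const M
      · filter_upwards with s
        exact tendsto_const_nhds.mul
          (hA.comp (tendsto_atTop_add_const_right atTop (-s) tendsto_id))
    have heq : (∫ s : ℝ, φ s * A) = A * ∫ r : ℝ, φ r := by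
      rw [integral_mul_const, mul_comm]
    rw [← heq]
    exact key.congr fun t => (hcv t).symm
  · intro h
    rw [Metric.tendsto_atTop]
    intro ε hε
    obtain ⟨δ, hδ, hδf⟩ := Metric.uniformContinuous_iff.mp huc (ε / 4) (by linarith)
    set η := δ / 2 with hηdef
    have hη0 : 0 < η := by positivity
    set φ : ℝ → ℂ := Set.indicator (Set.Ioc 0 η) (fun _ => (η : ℂ)⁻¹) with hφdef
    have hφint : Integrable φ := by
      rw [hφdef, integrable_indicator_iff measurableSet_Ioc]
      refine (integrableOn_const_iff).mpr (Or.inr ?_)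
      exact measure_Ioc_lt_top
    have hηC : (η : ℂ) ≠ 0 := by exact_mod_cast hη0.ne'
    have hint1 : (∫ r : ℝ, φ r) = 1 := by
      rw [hφdef, integral_indicator measurableSet_Ioc, setIntegral_const, measureReal_def, Real.volume_Ioc,
        sub_zero, ENNReal.toReal_ofReal hη0.le, Complex.real_smul, mul_inv_cancel₀ hηC]
    have hIco : ∀ t : ℝ, IntegrableOn f (Set.Ico (t - η) t) volume :=
      fun t => (hf.integrableOn_Icc).mono_set Set.Ico_subset_Icc_self
    have hvol : ∀ t : ℝ, (volume (Set.Ico (t - η) t)).toReal = η := by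
      intro t
      rw [Real.volume_Ico, ENNReal.toReal_ofReal (by linarith)]
      ring
    have hconv : ∀ t : ℝ, (∫ r : ℝ, φ (t - r) * f r)
        = (η : ℂ)⁻¹ * ∫ r in Set.Ico (t - η) t, f r := by
      intro t
      have hpt : ∀ r : ℝ, φ (t - r) * f r
          = Set.indicator (Set.Ico (t - η) t) (fun r => (η : ℂ)⁻¹ * f r) r := by
        intro r
        by_cases hr : r ∈ Set.Ico (t - η) t
        · have hm : t - r ∈ Set.Ioc 0 η := ⟨by linarith [hr.2], by linarith [hr.1]⟩
          rw [hφdef, Set.indicator_of_mem hm, Set.indicator_of_mem hr]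
        · have hm : t - r ∉ Set.Ioc 0 η := by
            intro hc
            exact hr ⟨by linarith [hc.2], by linarith [hc.1]⟩
          rw [hφdef, Set.indicator_of_notMem hm, Set.indicator_of_notMem hr, zero_mul]
      simp_rw [hpt]
      rw [integral_indicator measurableSet_Ico, integral_const_mul]
    have hA1 : Tendsto (fun t : ℝ => ∫ r : ℝ, φ (t - r) * f r) atTop (𝓝 A) := by
      have := h φ hφint
      rwa [hint1, mul_one] at this
    rw [Metric.tendsto_atTop] at hA1
    obtain ⟨N, hN⟩ := hA1 (ε / 2) (by linarith)
    refine ⟨N, fun t ht => ?_⟩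
    have hft : f t = (η : ℂ)⁻¹ * ∫ _r in Set.Ico (t - η) t, f t := by
      rw [setIntegral_const, measureReal_def, hvol t, Complex.real_smul, ← mul_assoc,
        inv_mul_cancel₀ hηC, one_mul]
    have hdiff : ‖f t - (∫ r : ℝ, φ (t - r) * f r)‖ ≤ ε / 4 := by
      rw [hconv t, hft, ← mul_sub, ← integral_sub ((integrableOn_const_iff (C := f t) (μ := volume)).mpr
        (Or.inr measure_Ico_lt_top)) (hIco t)]
      rw [norm_mul, norm_inv, Complex.norm_real, Real.norm_of_nonneg hη0.le]
      have hptb : ∀ r ∈ Set.Ico (t - η) t, ‖f t - f r‖ ≤ ε / 4 := by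
        intro r hr
        have hd : dist t r < δ := by
          rw [Real.dist_eq, _root_.abs_of_nonneg (by linarith [hr.2])]
          have h1 := hr.1
          have h2 := hr.2
          rw [hηdef] at h1
          linarith
        have := hδf hd
        rw [dist_eq_norm] at this
        exact this.le
      have hb : ‖∫ r in Set.Ico (t - η) t, (f t - f r)‖ ≤ ε / 4 * η := by
        have := norm_setIntegral_le_of_norm_le_const (C := ε / 4)
          (measure_Ico_lt_top (μ := volume) (a := t - η) (b := t)) hptb
        rw [measureReal_def, hvol t] at this
        exact this
      calc η⁻¹ * ‖∫ r in Set.Ico (t - η) t, (f t - f r)‖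
          ≤ η⁻¹ * (ε / 4 * η) := by
            exact mul_le_mul_of_nonneg_left hb (by positivity)
        _ = ε / 4 := by field_simp
    have := hN t ht
    calc dist (f t) A ≤ dist (f t) (∫ r : ℝ, φ (t - r) * f r)
          + dist (∫ r : ℝ, φ (t - r) * f r) A := dist_triangle _ _ _
      _ ≤ ε / 4 + dist (∫ r : ℝ, φ (t - r) * f r) A := by
          rw [dist_eq_norm]; exact add_le_add_left hdiff _
      _ < ε / 4 + ε / 2 := by linarith [hN t ht]
      _ < ε := by linarith
end
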